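/- Let P = (A ⊎ B, E) be a finite connected bipartite graph with parts A and B, with A nonempty, and let k ≥ 2 be an integer and w : A ∪ B → {2,3,…,k} a weight function satisfying w(a) ≥ deg_P(a) for every node a ∈ A. Then w(B) ≤ w(A)·(k − 1 + 1/|A|). Moreover, if there exists a node a ∈ A with w(a) > deg_P(a), then w(B) ≤ w(A)·(k − 1). Here w(A) = Σ_{a∈A} w(a) and w(B) = Σ_{b∈B} w(b), and deg_P denotes vertex degree in P. -/

import Mathlib

open Finset

lemma connected_card_le_edges {V : Type} [Fintype V] [DecidableEq V]
    (G : SimpleGraph V) [DecidableRel G.Adj] (h : G.Connected) :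
    Fintype.card V ≤ G.edgeFinset.card + 1 := by
  obtain ⟨v₀⟩ := h.nonempty
  have key : ∀ v : V, v ≠ v₀ → ∃ u, G.Adj v u ∧ G.dist u v₀ < G.dist v v₀ := by
    intro v hv
    obtain ⟨p, hp⟩ := h.exists_walk_length_eq_dist v v₀
    have hpos : 0 < G.dist v v₀ := h.pos_dist_of_ne hv
    have hnil : ¬ p.Nil := by rw [SimpleGraph.Walk.not_nil_iff_lt_length]; omega
    refine ⟨p.snd, p.adj_snd hnil, ?_⟩
    have h1 := G.dist_le p.tail
    have h2 := SimpleGraph.Walk.length_tail_add_one hnil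
    omega
  choose f hadj hlt using key
  have hinj : (Finset.univ.erase v₀).card ≤ G.edgeFinset.card := by
    apply Finset.card_le_card_of_injOn
      (fun v => if hv : v = v₀ then s(v₀, v₀) else s(v, f v hv))
    · intro v hv
      have hv' : v ≠ v₀ := (Finset.mem_erase.mp hv).1
      simp only [dif_neg hv']
      rw [Finset.mem_coe, SimpleGraph.mem_edgeFinset]
      exact (hadj v hv')
    · intro a ha b hb hab
      have ha' : a ≠ v₀ := (Finset.mem_erase.mp ha).1
      have hb' : b ≠ v₀ := (Finset.mem_erase.mp hb).1
      simp only [dif_neg ha', dif_neg hb', Sym2.eq, Sym2.rel_iff', Prod.mk.injEq,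
        Prod.swap_prod_mk] at hab
      rcases hab with ⟨h1, _⟩ | ⟨h1, h2⟩
      · exact h1
      · exfalso
        have l1 := hlt a ha'
        have l2 := hlt b hb'
        rw [h2] at l1
        rw [← h1] at l2
        omega
  have := Finset.card_erase_of_mem (Finset.mem_univ v₀)
  rw [Finset.card_univ] at this
  have hpos : 0 < Fintype.card V := Fintype.card_pos_iff.mpr ⟨v₀⟩
  omega

lemma bip_edge_count {V : Type} [Fintype V] [DecidableEq V]
    (P : SimpleGraph V) [DecidableRel P.Adj]
    (A B : Finset V) (hdisj : Disjoint A B)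
    (hbip : ∀ u x : V, P.Adj u x → (u ∈ A ∧ x ∈ B) ∨ (u ∈ B ∧ x ∈ A)) :
    P.edgeFinset.card = ∑ a ∈ A, P.degree a := by
  have heq : P.edgeFinset = A.biUnion (fun a => P.incidenceFinset a) := by
    ext e
    simp only [Finset.mem_biUnion, SimpleGraph.mem_edgeFinset,
      SimpleGraph.mem_incidenceFinset]
    constructor
    · intro he
      induction e with
      | h u x =>
        rw [SimpleGraph.mem_edgeSet] at he
        rcases hbip u x he with ⟨hu, hx⟩ | ⟨hu, hx⟩
        · exact ⟨u, hu, ⟨he, Sym2.mem_mk_left u x⟩⟩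
        · exact ⟨x, hx, ⟨he, Sym2.mem_mk_right u x⟩⟩
    · rintro ⟨a, _, he, _⟩
      exact he
  rw [heq, Finset.card_biUnion]
  · exact Finset.sum_congr rfl fun a _ => P.card_incidenceFinset_eq_degree a
  · intro a ha a' ha' hne
    rw [Function.onFun, Finset.disjoint_left]
    intro e he he'
    rw [SimpleGraph.mem_incidenceFinset] at he he'
    obtain ⟨hedge, hae⟩ := he
    obtain ⟨_, ha'e⟩ := he'
    induction e with
    | h u x =>
      rw [SimpleGraph.mem_edgeSet] at hedge
      rw [Sym2.mem_iff] at hae ha'e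
      have huA : u ∈ A ∧ x ∈ A := by
        rcases hae with rfl | rfl <;> rcases ha'e with rfl | rfl <;>
          first | exact absurd rfl hne | exact ⟨ha, ha'⟩ | exact ⟨ha', ha⟩
      rcases hbip u x hedge with ⟨_, hx⟩ | ⟨hu, _⟩
      · exact (Finset.disjoint_left.mp hdisj huA.2 hx)
      · exact (Finset.disjoint_left.mp hdisj huA.1 hu)


/-- Proposition: combinatorial property of connected bipartite graphs.
Let `P` be a finite connected bipartite graph with parts `A` (nonempty) and `B`, let
`k ≥ 2`, and let `w` be a weight function into `{2,…,k}` with `w(a) ≥ deg_P(a)` for all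
`a ∈ A`.  Then `w(B) ≤ w(A)·(k − 1 + 1/|A|)`; moreover, if `w(a) > deg_P(a)` for some
`a ∈ A`, then `w(B) ≤ w(A)·(k − 1)`. -/
theorem bipartite_weight_bound
    {V : Type} [Fintype V] [DecidableEq V]
    (P : SimpleGraph V) [DecidableRel P.Adj]
    (A B : Finset V)
    (hcover : ∀ x : V, x ∈ A ∨ x ∈ B)
    (hdisj : Disjoint A B)
    (hbip : ∀ u x : V, P.Adj u x → (u ∈ A ∧ x ∈ B) ∨ (u ∈ B ∧ x ∈ A))
    (hconn : P.Connected)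
    (hA : A.Nonempty)
    (k : ℕ) (hk : 2 ≤ k)
    (w : V → ℕ) (hw : ∀ x : V, 2 ≤ w x ∧ w x ≤ k)
    (hdeg : ∀ a ∈ A, P.degree a ≤ w a) :
    (∑ b ∈ B, (w b : ℝ)) ≤ (∑ a ∈ A, (w a : ℝ)) * ((k : ℝ) - 1 + 1 / (A.card : ℝ)) ∧
      ((∃ a ∈ A, P.degree a < w a) →
        (∑ b ∈ B, (w b : ℝ)) ≤ (∑ a ∈ A, (w a : ℝ)) * ((k : ℝ) - 1)) := by
  classical
  have hE : P.edgeFinset.card = ∑ a ∈ A, P.degree a := bip_edge_count P A B hdisj hbip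
  have hcardV : Fintype.card V = A.card + B.card := by
    rw [← Finset.card_union_of_disjoint hdisj, ← Finset.card_univ]
    congr 1
    symm
    rw [Finset.eq_univ_iff_forall]
    intro x
    rcases hcover x with h | h
    · exact Finset.mem_union_left _ h
    · exact Finset.mem_union_right _ h
  have htree : A.card + B.card ≤ P.edgeFinset.card + 1 := by
    rw [← hcardV]; exact connected_card_le_edges P hconn
  have hdegsum : ∑ a ∈ A, P.degree a ≤ ∑ a ∈ A, w a := Finset.sum_le_sum hdeg
  have hS_le : ∑ a ∈ A, w a ≤ k * A.card := by
    calc ∑ a ∈ A, w a ≤ ∑ _a ∈ A, k := Finset.sum_le_sum (fun a _ => (hw a).2)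
    _ = k * A.card := by rw [Finset.sum_const, smul_eq_mul, mul_comm]
  have hB_le : ∑ b ∈ B, w b ≤ k * B.card := by
    calc ∑ b ∈ B, w b ≤ ∑ _b ∈ B, k := Finset.sum_le_sum (fun b _ => (hw b).2)
    _ = k * B.card := by rw [Finset.sum_const, smul_eq_mul, mul_comm]
  have hApos : 0 < A.card := hA.card_pos
  -- real versions
  have hnA : (0 : ℝ) < (A.card : ℝ) := by exact_mod_cast hApos
  have hnA1 : (1 : ℝ) ≤ (A.card : ℝ) := by exact_mod_cast hApos
  have hScast : (((∑ a ∈ A, w a : ℕ)) : ℝ) = ∑ a ∈ A, (w a : ℝ) := by push_cast; rfl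
  have hBcast : (((∑ b ∈ B, w b : ℕ)) : ℝ) = ∑ b ∈ B, (w b : ℝ) := by push_cast; rfl
  have c1 : (∑ b ∈ B, (w b : ℝ)) ≤ (k : ℝ) * (B.card : ℝ) := by
    rw [← hBcast]; exact_mod_cast hB_le
  have c2 : ((A.card : ℝ)) + (B.card : ℝ) ≤ (∑ a ∈ A, (w a : ℝ)) + 1 := by
    rw [← hScast]
    have : A.card + B.card ≤ (∑ a ∈ A, w a) + 1 := by omega
    exact_mod_cast this
  have c3 : (∑ a ∈ A, (w a : ℝ)) ≤ (k : ℝ) * (A.card : ℝ) := by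
    rw [← hScast]; exact_mod_cast hS_le
  have c4 : (0 : ℝ) ≤ (B.card : ℝ) := by positivity
  have ck : (2 : ℝ) ≤ (k : ℝ) := by exact_mod_cast hk
  constructor
  · have key : (∑ b ∈ B, (w b : ℝ)) * (A.card : ℝ) ≤
        (∑ a ∈ A, (w a : ℝ)) * (((k : ℝ) - 1) * (A.card : ℝ) + 1) := by
      nlinarith [mul_le_mul_of_nonneg_right c1 (le_of_lt hnA),
        mul_le_mul_of_nonneg_left c2 (by positivity : (0:ℝ) ≤ (k:ℝ) * (A.card : ℝ)),
        mul_nonneg (by linarith : (0:ℝ) ≤ (A.card : ℝ) - 1) (by linarith : (0:ℝ) ≤ (k:ℝ) * (A.card:ℝ) - ∑ a ∈ A, (w a : ℝ))]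
    have := (le_div_iff₀ hnA).mpr key
    calc (∑ b ∈ B, (w b : ℝ))
        ≤ (∑ a ∈ A, (w a : ℝ)) * (((k : ℝ) - 1) * (A.card : ℝ) + 1) / (A.card : ℝ) := this
      _ = (∑ a ∈ A, (w a : ℝ)) * ((k : ℝ) - 1 + 1 / (A.card : ℝ)) := by
          field_simp
  · rintro ⟨a, ha, hlt⟩
    have hstrict : ∑ a ∈ A, P.degree a < ∑ a ∈ A, w a :=
      Finset.sum_lt_sum hdeg ⟨a, ha, hlt⟩
    have c2' : ((A.card : ℝ)) + (B.card : ℝ) ≤ (∑ a ∈ A, (w a : ℝ)) := by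
      rw [← hScast]
      have : A.card + B.card ≤ ∑ a ∈ A, w a := by omega
      exact_mod_cast this
    nlinarith [mul_le_mul_of_nonneg_left c2' (by positivity : (0:ℝ) ≤ (k:ℝ))]
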